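/- Let $S \in \mathbb{R}^{N\times N}$ be skew-symmetric, $H : \mathbb{R}^N \to \mathbb{R}$ continuously differentiable, $h \in \mathbb{R}$, and let $Y_0, Y_1 \in \mathbb{R}^{N\times N}$ be diagonal matrices. Suppose $x_0, x_1 \in \mathbb{R}^N$ satisfy the second-order exponential discrete gradient scheme $e^{Y_1}x_1 = e^{Y_0}x_0 + h\int_0^1 S\,\nabla H\big((1-\tau)\,e^{Y_0}x_0 + \tau\,e^{Y_1}x_1\big)\,d\tau$. Then $H(e^{Y_1}x_1) = H(e^{Y_0}x_0)$. -/

import Mathlib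

open Matrix MeasureTheory

/-- The second-order exponential discrete gradient scheme
`e^{Y₁}x₁ = e^{Y₀}x₀ + h ∫₀¹ S ∇H((1-τ) e^{Y₀}x₀ + τ e^{Y₁}x₁) dτ`, with `S`
skew-symmetric, `H` continuously differentiable and `Y₀ = diagonal y₀`,
`Y₁ = diagonal y₁` diagonal matrices (whose matrix exponentials are the diagonal
matrices with entries `exp (y₀ k)`, `exp (y₁ k)`), satisfies
`H(e^{Y₁}x₁) = H(e^{Y₀}x₀)`. -/
theorem exponential_discrete_gradient_energy_preservation
    {N : ℕ}
    (S : Matrix (Fin N) (Fin N) ℝ) (hS : Sᵀ = -S)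
    (H : (Fin N → ℝ) → ℝ) (gradH : (Fin N → ℝ) → (Fin N → ℝ))
    (hH : ContDiff ℝ 1 H)
    (hgradH : ∀ y w, (fderiv ℝ H y) w = dotProduct (gradH y) w)
    (h : ℝ) (y₀ y₁ : Fin N → ℝ) (x₀ x₁ : Fin N → ℝ)
    (hscheme : (Matrix.diagonal (fun k => Real.exp (y₁ k))).mulVec x₁
        = (Matrix.diagonal (fun k => Real.exp (y₀ k))).mulVec x₀
          + h • ∫ τ in (0:ℝ)..1, S.mulVec (gradH
              ((1 - τ) • (Matrix.diagonal (fun k => Real.exp (y₀ k))).mulVec x₀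
                + τ • (Matrix.diagonal (fun k => Real.exp (y₁ k))).mulVec x₁))) :
    H ((Matrix.diagonal (fun k => Real.exp (y₁ k))).mulVec x₁)
      = H ((Matrix.diagonal (fun k => Real.exp (y₀ k))).mulVec x₀) := by
  set a := (Matrix.diagonal (fun k => Real.exp (y₀ k))).mulVec x₀ with ha
  set b := (Matrix.diagonal (fun k => Real.exp (y₁ k))).mulVec x₁ with hb
  -- gradH is continuous
  have hgrad_eq : ∀ y, gradH y = fun k => (fderiv ℝ H y) (Pi.single k 1) := by
    intro y; funext k
    rw [hgradH]
    simp [dotProduct, Pi.single_apply, Finset.sum_ite_eq']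
  have hfc : Continuous (fderiv ℝ H) := hH.continuous_fderiv one_ne_zero
  have hgc : Continuous gradH := by
    have : Continuous fun y => (fun k => (fderiv ℝ H y) (Pi.single k 1)) := by
      apply continuous_pi
      intro k
      exact hfc.clm_apply continuous_const
    convert this using 1
    funext y; exact hgrad_eq y
  set g : ℝ → (Fin N → ℝ) := fun τ => gradH ((1 - τ) • a + τ • b) with hg
  have hgcont : Continuous g := by
    exact hgc.comp (((continuous_const.sub continuous_id).smul continuous_const).add
      (continuous_id.smul continuous_const))
  have hgint : IntervalIntegrable g volume 0 1 := hgcont.intervalIntegrable 0 1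
  -- mulVec as CLM
  let M : (Fin N → ℝ) →L[ℝ] (Fin N → ℝ) := LinearMap.toContinuousLinearMap S.mulVecLin
  have hM : ∀ v, M v = S.mulVec v := fun v => rfl
  set w : Fin N → ℝ := ∫ τ in (0:ℝ)..1, g τ with hw
  have hba : b - a = h • S.mulVec w := by
    have hcomm : (∫ τ in (0:ℝ)..1, S.mulVec (g τ)) = S.mulVec w := by
      have := (M.intervalIntegral_comp_comm hgint (a := 0) (b := 1))
      simpa [hM] using this
    rw [hscheme]
    rw [← hcomm]
    abel
  -- FTC
  let c := b - a
  have hderiv : ∀ τ : ℝ, HasDerivAt (fun t : ℝ => H ((1 - t) • a + t • b))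
      (dotProduct (g τ) c) τ := by
    intro τ
    have hv : ∀ t : ℝ, (1 - t) • a + t • b = a + t • c := by
      intro t
      simp only [c, smul_sub, sub_smul, one_smul]
      abel
    have hlin : HasDerivAt (fun t : ℝ => a + t • c) c τ := by
      simpa using ((hasDerivAt_id τ).smul_const c).const_add a
    have hHd : HasFDerivAt H (fderiv ℝ H (a + τ • c)) (a + τ • c) :=
      (hH.differentiable one_ne_zero (a + τ • c)).hasFDerivAt
    have := hHd.comp_hasDerivAt τ hlin
    have heq : (fderiv ℝ H (a + τ • c)) c = dotProduct (g τ) c := by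
      rw [hgradH]
      congr 1
      rw [hg]
      simp only [hv]
    rw [heq] at this
    simpa only [Function.comp_def, hv] using this
  have hintc : IntervalIntegrable (fun τ => dotProduct (g τ) c) volume 0 1 := by
    apply Continuous.intervalIntegrable
    unfold dotProduct
    exact continuous_finset_sum _ fun k _ => ((continuous_apply k).comp hgcont).mul continuous_const
  have hftc : (∫ τ in (0:ℝ)..1, dotProduct (g τ) c)
      = H ((1-(1:ℝ)) • a + (1:ℝ) • b) - H ((1-(0:ℝ)) • a + (0:ℝ) • b) :=
    intervalIntegral.integral_eq_sub_of_hasDerivAt (fun t _ => hderiv t) hintc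
  simp only [sub_self, zero_smul, one_smul, sub_zero, zero_add, add_zero] at hftc
  -- pull out c
  let L : (Fin N → ℝ) →ₗ[ℝ] ℝ :=
    { toFun := fun v => dotProduct v c
      map_add' := fun u v => add_dotProduct u v c
      map_smul' := fun r v => smul_dotProduct r v c }
  have hLint : (∫ τ in (0:ℝ)..1, dotProduct (g τ) c) = dotProduct w c := by
    have := (LinearMap.toContinuousLinearMap L).intervalIntegral_comp_comm hgint (a := 0) (b := 1)
    simpa [L] using this
  have hzero : dotProduct w c = 0 := by
    have : dotProduct w (S.mulVec w) = 0 := by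
      have h1 : dotProduct w (S.mulVec w) = dotProduct (S.mulVec w) w := dotProduct_comm _ _
      have h2 : dotProduct w (S.mulVec w) = dotProduct (Sᵀ.mulVec w) w := by
        rw [Matrix.dotProduct_mulVec, ← Matrix.mulVec_transpose, dotProduct_comm]
      rw [hS] at h2
      rw [Matrix.neg_mulVec, neg_dotProduct] at h2
      rw [← h1] at h2
      linarith
    simp only [c, hba, dotProduct_smul, this, smul_eq_mul, mul_zero]
  rw [hLint, hzero] at hftc
  linarith
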